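/- arXiv:1809.05851 — 3 statements merged into one kernel-verified Lean document; each statement's English description precedes it below -/
import Mathlib

section
/- Let R be an integral domain with field of fractions K, and let I₁, I₂, J be invertible fractional ideals of R in K with I₁ ≤ J, I₂ ≤ J, and I₁·J⁻¹ + I₂·J⁻¹ = 1 (the unit fractional ideal R). Then I₁ ⊓ I₂ = I₁·I₂·J⁻¹, where ⊓ denotes the intersection (inf) of fractional ideals. In particular, I₁ ⊓ I₂ is an invertible fractional ideal. -/
open nonZeroDivisors

/-- Let `R` be an integral domain with fraction field `K`, and let `I₁, I₂, J` be invertible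
fractional ideals with `I₁ ≤ J`, `I₂ ≤ J` and `I₁·J⁻¹ + I₂·J⁻¹ = 1`.  Then the intersection
`I₁ ⊓ I₂` equals `I₁·I₂·J⁻¹`; in particular it is an invertible fractional ideal. -/
theorem inf_eq_mul_mul_inv_of_comaximal
    {R K : Type*} [CommRing R] [IsDomain R] [Field K] [Algebra R K] [IsFractionRing R K]
    (I₁ I₂ J : FractionalIdeal R⁰ K)
    (hI₁ : IsUnit I₁) (hI₂ : IsUnit I₂) (hJ : IsUnit J)
    (h₁ : I₁ ≤ J) (h₂ : I₂ ≤ J)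
    (hco : I₁ * J⁻¹ + I₂ * J⁻¹ = 1) :
    I₁ ⊓ I₂ = I₁ * I₂ * J⁻¹ ∧ IsUnit (I₁ ⊓ I₂) := by
  have hJJ : J * J⁻¹ = 1 := (FractionalIdeal.mul_inv_cancel_iff_isUnit K).mpr hJ
  set A := I₁ * J⁻¹ with hA
  set B := I₂ * J⁻¹ with hB
  have hA1 : A ≤ 1 := by
    rw [hA, ← hJJ]; exact mul_le_mul_left h₁ J⁻¹
  have hB1 : B ≤ 1 := by
    rw [hB, ← hJJ]; exact mul_le_mul_left h₂ J⁻¹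
  -- A ⊓ B = A * B
  have key : A ⊓ B = A * B := by
    apply le_antisymm
    · calc A ⊓ B = (A ⊓ B) * (A + B) := by rw [hco, mul_one]
        _ = (A ⊓ B) * A + (A ⊓ B) * B := by rw [mul_add]
        _ ≤ B * A + A * B := by
          rw [← FractionalIdeal.sup_eq_add, ← FractionalIdeal.sup_eq_add]
          exact sup_le_sup (mul_le_mul_left inf_le_right A)
            (mul_le_mul_left inf_le_left B)
        _ = A * B + A * B := by rw [mul_comm B A]
        _ = A * B := by rw [← FractionalIdeal.sup_eq_add, sup_idem]
    · exact le_inf (le_trans (mul_le_mul_right hB1 A) (by simp))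
        (le_trans (mul_le_mul_left hA1 B) (by simp))
  have hAJ : A * J = I₁ := by
    rw [hA, mul_assoc, mul_comm J⁻¹ J, hJJ, mul_one]
  have hBJ : B * J = I₂ := by
    rw [hB, mul_assoc, mul_comm J⁻¹ J, hJJ, mul_one]
  -- (A ⊓ B) * J = (A * J) ⊓ (B * J)
  have inf_mul : (A * J) ⊓ (B * J) = (A ⊓ B) * J := by
    apply le_antisymm
    · have h : ((A * J) ⊓ (B * J)) * J⁻¹ ≤ A ⊓ B := by
        refine le_inf ?_ ?_
        · calc ((A * J) ⊓ (B * J)) * J⁻¹ ≤ (A * J) * J⁻¹ :=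
                mul_le_mul_left inf_le_left J⁻¹
            _ = A * (J * J⁻¹) := by rw [mul_assoc]
            _ = A := by rw [hJJ, mul_one]
        · calc ((A * J) ⊓ (B * J)) * J⁻¹ ≤ (B * J) * J⁻¹ :=
                mul_le_mul_left inf_le_right J⁻¹
            _ = B * (J * J⁻¹) := by rw [mul_assoc]
            _ = B := by rw [hJJ, mul_one]
      calc (A * J) ⊓ (B * J) = (((A * J) ⊓ (B * J)) * J⁻¹) * J := by
            conv_rhs => rw [mul_assoc, mul_comm J⁻¹ J, hJJ, mul_one]
        _ ≤ (A ⊓ B) * J := mul_le_mul_left h J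
    · exact le_inf (mul_le_mul_left inf_le_left J) (mul_le_mul_left inf_le_right J)
  have main : I₁ ⊓ I₂ = I₁ * I₂ * J⁻¹ := by
    calc I₁ ⊓ I₂ = (A * J) ⊓ (B * J) := by rw [hAJ, hBJ]
      _ = (A ⊓ B) * J := inf_mul
      _ = A * B * J := by rw [key]
      _ = I₁ * I₂ * J⁻¹ * (J * J⁻¹) := by rw [hA, hB]; ring
      _ = I₁ * I₂ * J⁻¹ := by rw [hJJ, mul_one]
  refine ⟨main, ?_⟩
  rw [main]
  exact (hI₁.mul hI₂).mul (IsUnit.of_mul_eq_one J (by rw [mul_comm]; exact hJJ))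
end

section
/- Let k be a field. Consider a commutative square of separated finite-type k-schemes with maps h_u : N(00) → N(01), v_l : N(00) → N(10), v_r : N(01) → N(11), h_d : N(10) → N(11), satisfying v_r ∘ h_u = h_d ∘ v_l. Suppose given open subschemes S(ij) ⊆ N(ij) for i, j ∈ {0,1}, each scheme-theoretically dense in N(ij), such that the four maps carry S(ij) into the corresponding S(i'j') and the induced square of the S(ij) is an elementary Nisnevich square (in particular the induced morphism S(00) → S(10) ×_{S(11)} S(01) is an isomorphism). Then, as open subschemes of N(00), h_u⁻¹(S(01)) ∩ v_l⁻¹(S(10)) = S(00). -/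
open AlgebraicGeometry CategoryTheory CategoryTheory.Limits

/-- A morphism of schemes `f : X ⟶ Y` is *scheme-theoretically dominant* if the canonical map
`O_Y → f_* O_X` is injective. -/
def SchemeTheoreticallyDominant {X Y : Scheme} (f : X ⟶ Y) : Prop :=
  ∀ V : Y.Opens, Function.Injective (f.app V)

/-- An elementary Nisnevich square: `f` is étale, `b` is an open immersion, the square is
cartesian, and `f` restricts to an isomorphism over the reduced complement of `b`. -/
def IsElemNisnevichSquare {S00 S01 S10 S11 : Scheme}
    (a : S00 ⟶ S01) (c : S00 ⟶ S10) (f : S01 ⟶ S11) (b : S10 ⟶ S11) : Prop :=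
  IsEtale f ∧ IsOpenImmersion b ∧ IsPullback a c f b ∧
  ∀ (Z : Scheme) (ζ : Z ⟶ S11), IsClosedImmersion ζ → IsReduced Z →
    Set.range ζ.base = (Set.range b.base)ᶜ →
    IsIso (pullback.fst ζ f)

/-- Separated and of finite type over the base. -/
def SepFT {X B : Scheme} (p : X ⟶ B) : Prop :=
  IsSeparated p ∧ LocallyOfFiniteType p ∧ QuasiCompact p

/-- If a composite is scheme-theoretically dominant, so is the second morphism. -/
lemma SchemeTheoreticallyDominant.of_comp {X Y Z : Scheme} {p : X ⟶ Y} {q : Y ⟶ Z}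
    (h : SchemeTheoreticallyDominant (p ≫ q)) : SchemeTheoreticallyDominant q := by
  intro V
  have hV := h V
  rw [Scheme.Hom.comp_app] at hV
  exact Function.Injective.of_comp (f := ⇑(p.app (q ⁻¹ᵁ V))) (g := ⇑(q.app V)) hV

/-- Injectivity of a restriction map along a smaller inclusion. -/
lemma injective_presheaf_map_of_le {X : Scheme} {A B C : X.Opens} (hBA : B ≤ A) (hCA : C ≤ A)
    (hBC : B ≤ C)
    (hinj : Function.Injective (X.presheaf.map (homOfLE hBA).op)) :
    Function.Injective (X.presheaf.map (homOfLE hCA).op) := by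
  have heq : X.presheaf.map (homOfLE hBA).op =
      X.presheaf.map (homOfLE hCA).op ≫ X.presheaf.map (homOfLE hBC).op := by
    rw [← Functor.map_comp]
    congr 1
  rw [heq] at hinj
  exact Function.Injective.of_comp (f := ⇑(X.presheaf.map (homOfLE hBC).op))
    (g := ⇑(X.presheaf.map (homOfLE hCA).op)) hinj

/-- The inclusion morphism between opens is scheme-theoretically dominant if the smaller open
is scheme-theoretically dense. -/
lemma schemeTheoreticallyDominant_homOfLE {X : Scheme} {U V : X.Opens} (h : U ≤ V)
    (hU : SchemeTheoreticallyDominant U.ι) :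
    SchemeTheoreticallyDominant (X.homOfLE h) := by
  intro W
  rw [Scheme.homOfLE_app]
  have key := hU (V.ι ''ᵁ W)
  rw [Scheme.Opens.ι_app] at key
  refine injective_presheaf_map_of_le _ _ ?_ key
  intro x hx
  obtain ⟨u, hu, rfl⟩ := hx
  refine ⟨u, ?_, rfl⟩
  show (X.homOfLE h).base u ∈ W
  obtain ⟨v, hv, hvu⟩ := hu
  have h1 : ((X.homOfLE h).base u).1 = v.1 := by
    refine (Scheme.homOfLE_apply h u).trans ?_
    exact hvu.symm
  have hv' : (X.homOfLE h).base u = v := Subtype.ext h1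
  rwa [hv']

/-- A scheme-theoretically dominant closed immersion is an isomorphism. -/
lemma isIso_of_isClosedImmersion_of_schemeTheoreticallyDominant {X Y : Scheme.{u}} (f : X ⟶ Y)
    [IsClosedImmersion f] (hf : SchemeTheoreticallyDominant f) : IsIso f := by
  show MorphismProperty.isomorphisms Scheme f
  rw [IsZariskiLocalAtTarget.iff_of_iSup_eq_top (P := MorphismProperty.isomorphisms Scheme) _
    (iSup_affineOpens_eq_top Y)]
  intro U
  have h1 : IsClosedImmersion (f ∣_ U.1) := IsZariskiLocalAtTarget.restrict ‹_› U.1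
  have h2 : IsAffine U.1.toScheme := U.2
  have hinj : Function.Injective ((f ∣_ U.1).appTop) := by
    rw [morphismRestrict_appTop]
    have hiso : IsIso (X.presheaf.map
        (eqToHom (image_morphismRestrict_preimage f U.1 ⊤)).op) := inferInstance
    have hinj := (ConcreteCategory.bijective_of_isIso (X.presheaf.map
        (eqToHom (image_morphismRestrict_preimage f U.1 ⊤)).op)).1
    exact Function.Injective.comp
      (f := ⇑(f.app (U.1.ι ''ᵁ ⊤)))
      (g := ⇑(X.presheaf.map (eqToHom (image_morphismRestrict_preimage f U.1 ⊤)).op))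
      hinj (hf _)
  exact IsClosedImmersion.isIso_of_injective_of_isAffine hinj

/-- Two morphisms into a scheme separated over a base agreeing on a scheme-theoretically
dominant subobject are equal. -/
lemma ext_of_schemeTheoreticallyDominant_of_isSeparated {W N Z V : Scheme.{u}}
    {f g : W ⟶ N} (s : N ⟶ Z) [IsSeparated s] (hfg : f ≫ s = g ≫ s)
    (ι : V ⟶ W) (hι : SchemeTheoreticallyDominant ι) (h : ι ≫ f = ι ≫ g) : f = g := by
  let X' : Over Z := Over.mk (f ≫ s)
  let Y' : Over Z := Over.mk s
  let U' : Over Z := Over.mk (ι ≫ f ≫ s)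
  let f' : X' ⟶ Y' := Over.homMk f
  let g' : X' ⟶ Y' := Over.homMk g hfg.symm
  let ι' : U' ⟶ X' := Over.homMk ι
  have hsep : IsSeparated Y'.hom := ‹_›
  have hcl : IsClosedImmersion (equalizer.ι f' g').left :=
    isClosedImmersion_equalizer_ι_left f' g'
  have hw : ι' ≫ f' = ι' ≫ g' := by ext1; exact h
  have hfac : (equalizer.lift ι' hw).left ≫ (equalizer.ι f' g').left = ι := by
    rw [← Over.comp_left, equalizer.lift_ι]
    rfl
  have hstd : SchemeTheoreticallyDominant (equalizer.ι f' g').left :=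
    SchemeTheoreticallyDominant.of_comp (hfac ▸ hι)
  have : IsIso (equalizer.ι f' g').left :=
    isIso_of_isClosedImmersion_of_schemeTheoreticallyDominant _ hstd
  rw [← cancel_epi (equalizer.ι f' g').left]
  exact congr($(equalizer.condition f' g').left)

/-- Given a commutative square of separated finite-type `k`-schemes `N(ij)` containing
scheme-theoretically dense open subschemes `S(ij)` which are respected by the square maps and
form an elementary Nisnevich square, one has
`h_u⁻¹(S(01)) ∩ v_l⁻¹(S(10)) = S(00)` as open subschemes of `N(00)`. -/
theorem preimage_inter_preimage_eq
    (k : Type) [Field k]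
    {N00 N01 N10 N11 : Scheme.{0}}
    (hu : N00 ⟶ N01) (vl : N00 ⟶ N10) (vr : N01 ⟶ N11) (hd : N10 ⟶ N11)
    (hcomm : hu ≫ vr = vl ≫ hd)
    (p11 : N11 ⟶ Spec (CommRingCat.of k))
    (h11 : SepFT p11) (h01 : SepFT (vr ≫ p11)) (h10 : SepFT (hd ≫ p11))
    (h00 : SepFT (hu ≫ vr ≫ p11))
    (U00 : N00.Opens) (U01 : N01.Opens) (U10 : N10.Opens) (U11 : N11.Opens)
    (hd00 : SchemeTheoreticallyDominant U00.ι)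
    (hd01 : SchemeTheoreticallyDominant U01.ι)
    (hd10 : SchemeTheoreticallyDominant U10.ι)
    (hd11 : SchemeTheoreticallyDominant U11.ι)
    (e_a : U00 ≤ hu ⁻¹ᵁ U01) (e_c : U00 ≤ vl ⁻¹ᵁ U10)
    (e_f : U01 ≤ vr ⁻¹ᵁ U11) (e_b : U10 ≤ hd ⁻¹ᵁ U11)
    (hsq : IsElemNisnevichSquare
      (hu.resLE U01 U00 e_a) (vl.resLE U10 U00 e_c)
      (vr.resLE U11 U01 e_f) (hd.resLE U11 U10 e_b)) :
    hu ⁻¹ᵁ U01 ⊓ vl ⁻¹ᵁ U10 = U00 := by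
  set W : N00.Opens := hu ⁻¹ᵁ U01 ⊓ vl ⁻¹ᵁ U10 with hW
  have hUW : U00 ≤ W := le_inf e_a e_c
  have eW1 : W ≤ hu ⁻¹ᵁ U01 := inf_le_left
  have eW2 : W ≤ vl ⁻¹ᵁ U10 := inf_le_right
  obtain ⟨-, -, hp, -⟩ := hsq
  -- the lift W ⟶ U00 given by the pullback square
  have comm : hu.resLE U01 W eW1 ≫ vr.resLE U11 U01 e_f =
      vl.resLE U10 W eW2 ≫ hd.resLE U11 U10 e_b := by
    rw [Scheme.Hom.resLE_comp_resLE, Scheme.Hom.resLE_comp_resLE]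
    simp_rw [hcomm]
  let t : W.toScheme ⟶ U00.toScheme := hp.lift (hu.resLE U01 W eW1) (vl.resLE U10 W eW2) comm
  have ht1 : t ≫ hu.resLE U01 U00 e_a = hu.resLE U01 W eW1 := hp.lift_fst _ _ _
  have ht2 : t ≫ vl.resLE U10 U00 e_c = vl.resLE U10 W eW2 := hp.lift_snd _ _ _
  let m : U00.toScheme ⟶ W.toScheme := N00.homOfLE hUW
  have hmt : m ≫ t = 𝟙 _ := by
    apply hp.hom_ext
    · rw [Category.assoc, ht1, Scheme.Hom.map_resLE, Category.id_comp]
    · rw [Category.assoc, ht2, Scheme.Hom.map_resLE, Category.id_comp]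
  let g : W.toScheme ⟶ N00 := t ≫ U00.ι
  have hghu : g ≫ hu = W.ι ≫ hu := by
    show t ≫ U00.ι ≫ hu = W.ι ≫ hu
    rw [← Scheme.Hom.resLE_comp_ι hu e_a, ← Category.assoc, ht1,
      Scheme.Hom.resLE_comp_ι hu eW1]
  have hgs : g ≫ (hu ≫ vr ≫ p11) = W.ι ≫ (hu ≫ vr ≫ p11) := by
    rw [← Category.assoc, ← Category.assoc, hghu]
    simp only [Category.assoc]
  have hsep : IsSeparated (hu ≫ vr ≫ p11) := h00.1
  have hstdm : SchemeTheoreticallyDominant m :=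
    schemeTheoreticallyDominant_homOfLE hUW hd00
  have hmg : m ≫ g = m ≫ W.ι := by
    show m ≫ t ≫ U00.ι = m ≫ W.ι
    rw [← Category.assoc, hmt, Category.id_comp, Scheme.homOfLE_ι]
  have hgι : g = W.ι :=
    ext_of_schemeTheoreticallyDominant_of_isSeparated (hu ≫ vr ≫ p11) hgs m hstdm hmg
  refine le_antisymm (fun x hx => ?_) hUW
  have hx' : U00.ι.base (t.base ⟨x, hx⟩) = x := by
    have := congr($(hgι).base ⟨x, hx⟩)
    simp [g] at this
    exact this
  have : x ∈ Set.range U00.ι.base := ⟨t.base ⟨x, hx⟩, hx'⟩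
  rwa [Scheme.Opens.range_ι] at this
end

section
/- Let C and D be categories and u : C → D a functor. Suppose given, for every object d of D, a subcategory I(d) of the comma category d ↓ u (whose objects are pairs (c, ψ : d → u(c)) with c in C, and whose morphisms (c, ψ) → (c', ψ') are maps g : c → c' with u(g) ∘ ψ = ψ') such that: (i) I(d) is thin (between any two objects there is at most one morphism) and cofiltered; (ii) I(d) corepresents the functor c' ↦ Hom_D(d, u(c')), i.e. for every object c' of C the canonical map colim over (c, ψ) ∈ I(d)^op of Hom_C(c, c') → Hom_D(d, u(c')), sending g to u(g) ∘ ψ, is a bijection. Let Δ be a finite category such that for any objects a, b of Δ, if Hom(a, b) and Hom(b, a) are both nonempty then a = b, and every endomorphism in Δ is an identity. For a functor d̲ : Δ → D, let I(d̲) be the subcategory of the comma category d̲ ↓ u^Δ (where u^Δ : C^Δ → D^Δ is postcomposition with u) whose objects X satisfy X(δ) ∈ I(d̲(δ)) for every object δ of Δ, and whose morphisms f satisfy f(δ) ∈ I(d̲(δ)) for every δ. Then I(d̲) is thin and cofiltered. -/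
open CategoryTheory

universe v₁ v₂ u₁ u₂ w

/-- A (not necessarily full) subcategory of a category `C`, given by a set of objects and,
for each pair of objects, a set of morphisms, containing identities of member objects and
closed under composition. -/
structure Subcategory (C : Type u₁) [Category.{v₁} C] where
  objs : Set C
  homs : ∀ X Y : C, Set (X ⟶ Y)
  id_mem : ∀ X ∈ objs, 𝟙 X ∈ homs X X
  comp_mem : ∀ {X Y Z : C}, X ∈ objs → Y ∈ objs → Z ∈ objs →
    ∀ {f : X ⟶ Y} {g : Y ⟶ Z}, f ∈ homs X Y → g ∈ homs Y Z → f ≫ g ∈ homs X Z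

namespace Subcategory

variable {C : Type u₁} [Category.{v₁} C] (S : Subcategory C)

/-- The underlying category of a subcategory. -/
def Carrier : Type u₁ := {X : C // X ∈ S.objs}

instance : Category S.Carrier where
  Hom X Y := {f : X.1 ⟶ Y.1 // f ∈ S.homs X.1 Y.1}
  id X := ⟨𝟙 X.1, S.id_mem X.1 X.2⟩
  comp := fun {X Y Z} f g => ⟨f.1 ≫ g.1, S.comp_mem X.2 Y.2 Z.2 f.2 g.2⟩
  id_comp f := Subtype.ext (Category.id_comp f.1)
  comp_id f := Subtype.ext (Category.comp_id f.1)
  assoc f g h := Subtype.ext (Category.assoc f.1 g.1 h.1)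

end Subcategory

variable {C : Type u₁} [Category.{v₁} C] {D : Type u₂} [Category.{v₂} D]

/-- A subcategory `I` of the comma category `d ↓ u` *corepresents* the functor
`c' ↦ Hom_D(d, u c')` if the canonical map
`colim_{(c,ψ) ∈ I(d)ᵒᵖ} Hom_C(c, c') → Hom_D(d, u c')`, `g ↦ u(g) ∘ ψ`, is a bijection;
since `I` is cofiltered, this is expressed elementwise by surjectivity and the usual
filtered-colimit description of equality. -/
def Corepresents (u : C ⥤ D) (d : D) (I : Subcategory (StructuredArrow d u)) : Prop :=
  (∀ (c' : C) (φ : d ⟶ u.obj c'),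
    ∃ X ∈ I.objs, ∃ g : X.right ⟶ c', X.hom ≫ u.map g = φ) ∧
  (∀ X₁ X₂ : StructuredArrow d u, X₁ ∈ I.objs → X₂ ∈ I.objs →
    ∀ (c' : C) (g₁ : X₁.right ⟶ c') (g₂ : X₂.right ⟶ c'),
      X₁.hom ≫ u.map g₁ = X₂.hom ≫ u.map g₂ →
      ∃ X₀ ∈ I.objs, ∃ (h₁ : X₀ ⟶ X₁) (h₂ : X₀ ⟶ X₂),
        h₁ ∈ I.homs X₀ X₁ ∧ h₂ ∈ I.homs X₀ X₂ ∧ h₁.right ≫ g₁ = h₂.right ≫ g₂)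

section OneD
variable {u : C ⥤ D} {d : D} {I : Subcategory (StructuredArrow d u)}

/-- equalize one pair, using thinness -/
lemma equalize_one (hthin : Quiver.IsThin I.Carrier) (hrep : Corepresents u d I)
    {X : StructuredArrow d u} (memX : X ∈ I.objs) {c' : C} (g₁ g₂ : X.right ⟶ c')
    (h : X.hom ≫ u.map g₁ = X.hom ≫ u.map g₂) :
    ∃ X₀ ∈ I.objs, ∃ k : X₀ ⟶ X, k ∈ I.homs X₀ X ∧ k.right ≫ g₁ = k.right ≫ g₂ := by
  obtain ⟨X₀, mem₀, h₁, h₂, m₁, m₂, e⟩ := hrep.2 X X memX memX c' g₁ g₂ h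
  have : h₁ = h₂ := by
    have := @Subsingleton.elim _ (hthin ⟨X₀, mem₀⟩ ⟨X, memX⟩) ⟨h₁, m₁⟩ ⟨h₂, m₂⟩
    exact congrArg Subtype.val this
  exact ⟨X₀, mem₀, h₁, m₁, by rw [e, this]⟩

lemma equalize_finset (hthin : Quiver.IsThin I.Carrier) (hrep : Corepresents u d I)
    {ι : Type*} (s : Finset ι)
    {X : StructuredArrow d u} (memX : X ∈ I.objs) {tgt : ι → C}
    (g₁ g₂ : ∀ i, X.right ⟶ tgt i)
    (h : ∀ i, X.hom ≫ u.map (g₁ i) = X.hom ≫ u.map (g₂ i)) :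
    ∃ X₀ ∈ I.objs, ∃ k : X₀ ⟶ X, k ∈ I.homs X₀ X ∧
      ∀ i ∈ s, k.right ≫ g₁ i = k.right ≫ g₂ i := by
  classical
  induction s using Finset.induction_on with
  | empty => exact ⟨X, memX, 𝟙 X, I.id_mem X memX, by simp⟩
  | @insert a s _ ih =>
    obtain ⟨X₀, mem₀, k, km, hk⟩ := ih
    obtain ⟨X₁, mem₁, k', k'm, e⟩ := equalize_one hthin hrep mem₀
      (k.right ≫ g₁ a) (k.right ≫ g₂ a)
      (by rw [u.map_comp, u.map_comp, ← Category.assoc, ← Category.assoc,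
              StructuredArrow.w k, h a])
    refine ⟨X₁, mem₁, k' ≫ k, I.comp_mem mem₁ mem₀ memX k'm km, ?_⟩
    intro i hi
    rcases Finset.mem_insert.mp hi with rfl | hi
    · simp only [StructuredArrow.comp_right, Category.assoc]
      exact e
    · have := hk i hi
      simp only [StructuredArrow.comp_right, Category.assoc, this]

lemma lift_finite (hcof : IsCofiltered I.Carrier) (hrep : Corepresents u d I)
    {ι : Type*} [Fintype ι] (tgt : ι → C) (φ : ∀ i, d ⟶ u.obj (tgt i)) :
    ∃ X ∈ I.objs, ∀ i, ∃ g : X.right ⟶ tgt i, X.hom ≫ u.map g = φ i := by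
  classical
  choose Y memY g wg using fun i => hrep.1 (tgt i) (φ i)
  haveI := hcof
  let F : ι → I.Carrier := fun i => ⟨Y i, memY i⟩
  obtain ⟨Z, hZ⟩ := IsCofiltered.inf_objs_exists (Finset.image F Finset.univ)
  refine ⟨Z.1, Z.2, fun i => ?_⟩
  obtain ⟨k⟩ := hZ (Finset.mem_image_of_mem F (Finset.mem_univ i))
  exact ⟨k.1.right ≫ g i, by
    rw [u.map_comp, ← Category.assoc, StructuredArrow.w k.1, wg i]⟩

lemma refine_to_homs (hrep : Corepresents u d I)
    {X E : StructuredArrow d u} (memX : X ∈ I.objs) (memE : E ∈ I.objs) (f : X ⟶ E) :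
    ∃ X₀ ∈ I.objs, ∃ k : X₀ ⟶ X, k ∈ I.homs X₀ X ∧
      ∃ m : X₀ ⟶ E, m ∈ I.homs X₀ E ∧ k.right ≫ f.right = m.right := by
  obtain ⟨X₀, mem₀, h₁, h₂, m₁, m₂, e⟩ := hrep.2 X E memX memE E.right f.right (𝟙 E.right)
    (by simpa using StructuredArrow.w f)
  exact ⟨X₀, mem₀, h₁, m₁, h₂, m₂, by simpa using e⟩

lemma refine_all_homs (hrep : Corepresents u d I)
    {ι : Type*} (s : Finset ι)
    {X : StructuredArrow d u} (memX : X ∈ I.objs)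
    {E : ι → StructuredArrow d u} (memE : ∀ i, E i ∈ I.objs) (f : ∀ i, X ⟶ E i) :
    ∃ X₀ ∈ I.objs, ∃ k : X₀ ⟶ X, k ∈ I.homs X₀ X ∧
      ∀ i ∈ s, ∃ m : X₀ ⟶ E i, m ∈ I.homs X₀ (E i) ∧ k.right ≫ (f i).right = m.right := by
  classical
  induction s using Finset.induction_on with
  | empty => exact ⟨X, memX, 𝟙 X, I.id_mem X memX, by simp⟩
  | @insert a s _ ih =>
    obtain ⟨X₀, mem₀, k, km, hk⟩ := ih
    obtain ⟨X₁, mem₁, k', k'm, m, mm, e⟩ := refine_to_homs hrep mem₀ (memE a) (k ≫ f a)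
    refine ⟨X₁, mem₁, k' ≫ k, I.comp_mem mem₁ mem₀ memX k'm km, ?_⟩
    intro i hi
    rcases Finset.mem_insert.mp hi with rfl | hi
    · refine ⟨m, mm, ?_⟩
      simp only [StructuredArrow.comp_right, Category.assoc] at e ⊢
      exact e
    · obtain ⟨m', mm', e'⟩ := hk i hi
      exact ⟨k' ≫ m', I.comp_mem mem₁ mem₀ (memE i) k'm mm',
        by simp only [StructuredArrow.comp_right, Category.assoc, e']⟩

end OneD

variable (u : C ⥤ D) {Δ : Type w} [SmallCategory Δ]

/-- Evaluation of an object of `d̲ ↓ u^Δ` at an object `δ` of `Δ`, giving an object of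
`d̲(δ) ↓ u`. -/
def evalObj (dd : Δ ⥤ D) (X : StructuredArrow dd ((Functor.whiskeringRight Δ C D).obj u)) (δ : Δ) :
    StructuredArrow (dd.obj δ) u :=
  StructuredArrow.mk (Y := X.right.obj δ) (X.hom.app δ)

/-- Evaluation of a morphism of `d̲ ↓ u^Δ` at an object `δ` of `Δ`. -/
def evalMap (dd : Δ ⥤ D) {X Y : StructuredArrow dd ((Functor.whiskeringRight Δ C D).obj u)}
    (f : X ⟶ Y) (δ : Δ) : evalObj u dd X δ ⟶ evalObj u dd Y δ :=
  StructuredArrow.homMk (f.right.app δ) (by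
    have h := NatTrans.congr_app (StructuredArrow.w f) δ
    rw [NatTrans.comp_app] at h
    exact h)

/-- The componentwise subcategory `I(d̲)` of the comma category `d̲ ↓ u^Δ`: objects and
morphisms which lie in `I(d̲(δ))` at every `δ`. -/
def diagramSubcat (I : ∀ d : D, Subcategory (StructuredArrow d u)) (dd : Δ ⥤ D) :
    Subcategory (StructuredArrow dd ((Functor.whiskeringRight Δ C D).obj u)) where
  objs := {X | ∀ δ : Δ, evalObj u dd X δ ∈ (I (dd.obj δ)).objs}
  homs X Y := {f | ∀ δ : Δ,
    evalMap u dd f δ ∈ (I (dd.obj δ)).homs (evalObj u dd X δ) (evalObj u dd Y δ)}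
  id_mem X hX δ := by
    have h : evalMap u dd (𝟙 X) δ = 𝟙 (evalObj u dd X δ) := by
      apply StructuredArrow.hom_ext
      simp [evalMap, evalObj]
    rw [h]
    exact (I (dd.obj δ)).id_mem _ (hX δ)
  comp_mem {X Y Z} hX hY hZ {f g} hf hg δ := by
    have h : evalMap u dd (f ≫ g) δ = evalMap u dd f δ ≫ evalMap u dd g δ := by
      apply StructuredArrow.hom_ext
      simp [evalMap, evalObj]
    rw [h]
    exact (I (dd.obj δ)).comp_mem (hX δ) (hY δ) (hZ δ) (hf δ) (hg δ)

/-- A partial object of `I(d̲)`, defined on the objects `e i` of `Δ`, together with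
maps to each member of the family `Xf`. -/
structure PartialDiag (I : ∀ d : D, Subcategory (StructuredArrow d u)) (dd : Δ ⥤ D)
    (J : Type) (Xf : J → StructuredArrow dd ((Functor.whiskeringRight Δ C D).obj u))
    (ι : Type w) (e : ι → Δ) where
  c : ι → C
  ψ : ∀ i, dd.obj (e i) ⟶ u.obj (c i)
  mem : ∀ i, StructuredArrow.mk (ψ i) ∈ (I (dd.obj (e i))).objs
  g : ∀ i i', (e i ⟶ e i') → (c i ⟶ c i')
  w : ∀ i i' (α : e i ⟶ e i'), ψ i ≫ u.map (g i i' α) = dd.map α ≫ ψ i'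
  g_id : ∀ i, g i i (𝟙 (e i)) = 𝟙 (c i)
  g_comp : ∀ i i' i'' (α : e i ⟶ e i') (β : e i' ⟶ e i''),
    g i i'' (α ≫ β) = g i i' α ≫ g i' i'' β
  p : ∀ (j : J) i, c i ⟶ (Xf j).right.obj (e i)
  pw : ∀ j i, ψ i ≫ u.map (p j i) = (Xf j).hom.app (e i)
  pmem : ∀ j i, StructuredArrow.homMk (p j i) (pw j i) ∈
    (I (dd.obj (e i))).homs (StructuredArrow.mk (ψ i)) (evalObj u dd (Xf j) (e i))
  pnat : ∀ j i i' (α : e i ⟶ e i'), g i i' α ≫ p j i' = p j i ≫ (Xf j).right.map α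

lemma extend_partial
    (I : ∀ d : D, Subcategory (StructuredArrow d u)) (dd : Δ ⥤ D)
    (hthin : ∀ d, Quiver.IsThin (I d).Carrier)
    (hcof : ∀ d, IsCofiltered (I d).Carrier)
    (hrep : ∀ d, Corepresents u d (I d))
    (J : Type) [Fintype J] (Xf : J → StructuredArrow dd ((Functor.whiskeringRight Δ C D).obj u))
    (hXf : ∀ j δ, evalObj u dd (Xf j) δ ∈ (I (dd.obj δ)).objs)
    (ι : Type w) [Fintype ι] [∀ a b : Δ, Fintype (a ⟶ b)] (e : ι → Δ) (δ₀ : Δ)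
    (hendo : ∀ α : δ₀ ⟶ δ₀, α = 𝟙 δ₀)
    (hmin : ∀ i, (e i ⟶ δ₀) → False)
    (P : PartialDiag u I dd J Xf ι e) :
    Nonempty (PartialDiag u I dd J Xf (Option ι) (fun o => o.elim δ₀ e)) := by
  classical
  -- Stage 1 : lift all the needed maps out of one object `Z₁` of `I (dd.obj δ₀)`.
  obtain ⟨Z₁, mem₁, h1⟩ := lift_finite (hcof (dd.obj δ₀)) (hrep (dd.obj δ₀))
    (ι := (Σ i : ι, (δ₀ ⟶ e i)) ⊕ J)
    (fun k => Sum.rec (fun a => P.c a.1) (fun j => (Xf j).right.obj δ₀) k)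
    (fun k => Sum.rec (fun a => dd.map a.2 ≫ P.ψ a.1) (fun j => (Xf j).hom.app δ₀) k)
  choose G hG using h1
  -- Stage 2 : refine so that the projections to the `Xf j` become morphisms of `I`.
  obtain ⟨Z₂, mem₂, k₂, k₂m, h2⟩ := refine_all_homs (hrep (dd.obj δ₀))
    (Finset.univ : Finset J) mem₁
    (E := fun j => evalObj u dd (Xf j) δ₀) (fun j => hXf j δ₀)
    (fun j => StructuredArrow.homMk (G (Sum.inr j)) (hG (Sum.inr j)))
  choose m mmem _hme using fun j => h2 j (Finset.mem_univ j)
  -- Stage 3 : equalize the finitely many compatibility conditions.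
  obtain ⟨Z₃, mem₃, k₃, k₃m, EQ⟩ := equalize_finset (hthin (dd.obj δ₀)) (hrep (dd.obj δ₀))
    (Finset.univ : Finset ((Σ a : (Σ i : ι, (δ₀ ⟶ e i)), Σ i'' : ι, (e a.1 ⟶ e i'')) ⊕
      ((Σ i : ι, (δ₀ ⟶ e i)) × J)))
    mem₂
    (tgt := fun r => Sum.rec (fun b => P.c b.2.1) (fun aj => (Xf aj.2).right.obj (e aj.1.1)) r)
    (fun r => Sum.rec
      (fun b => k₂.right ≫ G (Sum.inl ⟨b.2.1, b.1.2 ≫ b.2.2⟩))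
      (fun aj => k₂.right ≫ G (Sum.inl aj.1) ≫ P.p aj.2 aj.1.1) r)
    (fun r => Sum.rec
      (fun b => k₂.right ≫ G (Sum.inl b.1) ≫ P.g b.1.1 b.2.1 b.2.2)
      (fun aj => (m aj.2).right ≫ (Xf aj.2).right.map aj.1.2) r)
    (by
      rintro (⟨⟨i, α⟩, ⟨i'', β⟩⟩ | ⟨⟨i, α⟩, j⟩)
      · calc Z₂.hom ≫ u.map (k₂.right ≫ G (Sum.inl ⟨i'', α ≫ β⟩))
            = (Z₂.hom ≫ u.map k₂.right) ≫ u.map (G (Sum.inl ⟨i'', α ≫ β⟩)) := by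
              rw [u.map_comp, Category.assoc]
          _ = Z₁.hom ≫ u.map (G (Sum.inl ⟨i'', α ≫ β⟩)) := by rw [StructuredArrow.w k₂]
          _ = dd.map (α ≫ β) ≫ P.ψ i'' := hG (Sum.inl ⟨i'', α ≫ β⟩)
          _ = dd.map α ≫ dd.map β ≫ P.ψ i'' := by rw [dd.map_comp, Category.assoc]
          _ = dd.map α ≫ P.ψ i ≫ u.map (P.g i i'' β) := by rw [P.w]
          _ = (dd.map α ≫ P.ψ i) ≫ u.map (P.g i i'' β) := by rw [Category.assoc]
          _ = (Z₁.hom ≫ u.map (G (Sum.inl ⟨i, α⟩))) ≫ u.map (P.g i i'' β) := by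
              rw [hG (Sum.inl ⟨i, α⟩)]
          _ = ((Z₂.hom ≫ u.map k₂.right) ≫ u.map (G (Sum.inl ⟨i, α⟩))) ≫
                u.map (P.g i i'' β) := by rw [StructuredArrow.w k₂]
          _ = Z₂.hom ≫ u.map (k₂.right ≫ G (Sum.inl ⟨i, α⟩) ≫ P.g i i'' β) := by
              simp [u.map_comp]
      · calc Z₂.hom ≫ u.map (k₂.right ≫ G (Sum.inl ⟨i, α⟩) ≫ P.p j i)
            = ((Z₂.hom ≫ u.map k₂.right) ≫ u.map (G (Sum.inl ⟨i, α⟩))) ≫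
                u.map (P.p j i) := by simp [u.map_comp]
          _ = (Z₁.hom ≫ u.map (G (Sum.inl ⟨i, α⟩))) ≫ u.map (P.p j i) := by
              rw [StructuredArrow.w k₂]
          _ = (dd.map α ≫ P.ψ i) ≫ u.map (P.p j i) := by rw [hG (Sum.inl ⟨i, α⟩)]
          _ = dd.map α ≫ (Xf j).hom.app (e i) := by rw [Category.assoc, P.pw]
          _ = (Xf j).hom.app δ₀ ≫ u.map ((Xf j).right.map α) := by
              simpa using ((Xf j).hom.naturality α).symm
          _ = (Z₂.hom ≫ u.map (m j).right) ≫ u.map ((Xf j).right.map α) := by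
              rw [StructuredArrow.w (m j)]; rfl
          _ = Z₂.hom ≫ u.map ((m j).right ≫ (Xf j).right.map α) := by
              exact (Category.assoc _ _ _).trans (congrArg (fun x => Z₂.hom ≫ x) (u.map_comp _ _).symm))
  refine ⟨{
    c := fun o => o.elim Z₃.right P.c
    ψ := fun o => Option.rec Z₃.hom P.ψ o
    mem := ?mem
    g := fun o o' => match o, o' with
      | some i, some i' => fun α => P.g i i' α
      | none, some i => fun α => k₃.right ≫ k₂.right ≫ G (Sum.inl ⟨i, α⟩)
      | none, none => fun _ => 𝟙 Z₃.right
      | some i, none => fun α => (hmin i α).elim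
    w := ?w
    g_id := ?gid
    g_comp := ?gcomp
    p := fun j o => match o with
      | none => k₃.right ≫ (m j).right
      | some i => P.p j i
    pw := ?pw
    pmem := ?pmem
    pnat := ?pnat }⟩
  case mem =>
    rintro (_ | i)
    · exact mem₃
    · exact P.mem i
  case w =>
    rintro (_ | i) (_ | i') α
    · -- none none
      rw [hendo α]
      simp
    · -- none, some
      calc Z₃.hom ≫ u.map (k₃.right ≫ k₂.right ≫ G (Sum.inl ⟨i', α⟩))
          = ((Z₃.hom ≫ u.map k₃.right) ≫ u.map k₂.right) ≫ u.map (G (Sum.inl ⟨i', α⟩)) := by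
            simp [u.map_comp]
        _ = (Z₂.hom ≫ u.map k₂.right) ≫ u.map (G (Sum.inl ⟨i', α⟩)) := by
            rw [StructuredArrow.w k₃]
        _ = Z₁.hom ≫ u.map (G (Sum.inl ⟨i', α⟩)) := by rw [StructuredArrow.w k₂]
        _ = _ := hG (Sum.inl ⟨i', α⟩)
    · exact (hmin i α).elim
    · exact P.w i i' α
  case gid =>
    rintro (_ | i)
    · rfl
    · exact P.g_id i
  case gcomp =>
    rintro (_ | i) (_ | i') (_ | i'') α β
    · rw [hendo α, hendo β]; simp
    · rw [hendo α]
      show k₃.right ≫ k₂.right ≫ G (Sum.inl ⟨i'', 𝟙 δ₀ ≫ β⟩) =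
        𝟙 Z₃.right ≫ k₃.right ≫ k₂.right ≫ G (Sum.inl ⟨i'', β⟩)
      rw [Category.id_comp]
      exact congrArg (fun (x : δ₀ ⟶ e i'') => k₃.right ≫ k₂.right ≫ (show Z₁.right ⟶ P.c i'' from G (Sum.inl ⟨i'', x⟩))) (Category.id_comp β)
    · exact (hmin i' β).elim
    · have := EQ (Sum.inl ⟨⟨i', α⟩, ⟨i'', β⟩⟩) (Finset.mem_univ _)
      simpa using this
    · exact (hmin i α).elim
    · exact (hmin i α).elim
    · exact (hmin i' β).elim
    · exact P.g_comp i i' i'' α β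
  case pw =>
    rintro j (_ | i)
    · calc Z₃.hom ≫ u.map (k₃.right ≫ (m j).right)
          = (Z₃.hom ≫ u.map k₃.right) ≫ u.map (m j).right := by rw [u.map_comp, Category.assoc]
        _ = Z₂.hom ≫ u.map (m j).right := by rw [StructuredArrow.w k₃]
        _ = _ := StructuredArrow.w (m j)
    · exact P.pw j i
  case pmem =>
    rintro j (_ | i)
    · have hmem : k₃ ≫ m j ∈ (I (dd.obj δ₀)).homs Z₃ (StructuredArrow.mk ((Xf j).hom.app δ₀)) :=
        (I (dd.obj δ₀)).comp_mem mem₃ mem₂ (hXf j δ₀) k₃m (mmem j)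
      exact hmem
    · exact P.pmem j i
  case pnat =>
    rintro j (_ | i) (_ | i') α
    · rw [hendo α]; simp
    · have := EQ (Sum.inr ⟨⟨i', α⟩, j⟩) (Finset.mem_univ _)
      exact (Category.assoc _ _ _).trans ((congrArg (fun x => k₃.right ≫ x) (Category.assoc _ _ _)).trans
        (this.trans (Category.assoc _ _ _).symm))
    · exact (hmin i α).elim
    · exact P.pnat j i i' α

lemma exists_minimal {Δ' : Type w} [SmallCategory Δ'] [FinCategory Δ']
    (hnoloop : ∀ a b : Δ', Nonempty (a ⟶ b) → Nonempty (b ⟶ a) → a = b)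
    (S : Finset Δ') (hne : S.Nonempty) :
    ∃ δ₀ ∈ S, ∀ δ ∈ S, (δ ⟶ δ₀) → δ = δ₀ := by
  classical
  obtain ⟨δ₀, hδ₀, hm⟩ := S.exists_min_image
    (fun δ => (S.filter (fun δ' => Nonempty (δ' ⟶ δ))).card) hne
  refine ⟨δ₀, hδ₀, fun δ hδ α => by_contra fun hne2 => ?_⟩
  have hsub : S.filter (fun δ' => Nonempty (δ' ⟶ δ)) ⊂ S.filter (fun δ' => Nonempty (δ' ⟶ δ₀)) := by
    refine ⟨fun x hx => ?_, fun hcon => ?_⟩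
    · simp only [Finset.mem_filter] at hx ⊢
      exact ⟨hx.1, hx.2.elim fun β => ⟨β ≫ α⟩⟩
    · have h1 : δ₀ ∈ S.filter (fun δ' => Nonempty (δ' ⟶ δ₀)) := by
        simp only [Finset.mem_filter]
        exact ⟨hδ₀, ⟨𝟙 δ₀⟩⟩
      have h2 := hcon h1
      simp only [Finset.mem_filter] at h2
      exact hne2 (hnoloop δ δ₀ ⟨α⟩ h2.2)
  have hlt := Finset.card_lt_card hsub
  have hle := hm δ hδ
  omega

lemma exists_partialDiag
    (I : ∀ d : D, Subcategory (StructuredArrow d u)) (dd : Δ ⥤ D)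
    (hthin : ∀ d, Quiver.IsThin (I d).Carrier)
    (hcof : ∀ d, IsCofiltered (I d).Carrier)
    (hrep : ∀ d, Corepresents u d (I d))
    [FinCategory Δ]
    (hnoloop : ∀ a b : Δ, Nonempty (a ⟶ b) → Nonempty (b ⟶ a) → a = b)
    (hendo : ∀ (a : Δ) (α : a ⟶ a), α = 𝟙 a)
    (J : Type) [Fintype J] (Xf : J → StructuredArrow dd ((Functor.whiskeringRight Δ C D).obj u))
    (hXf : ∀ j δ, evalObj u dd (Xf j) δ ∈ (I (dd.obj δ)).objs) :
    ∀ S : Finset Δ, ∃ (ι : Type w) (_ : Fintype ι) (e : ι → Δ),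
      (∀ i, e i ∈ S) ∧ (∀ δ ∈ S, ∃ i, e i = δ) ∧ Nonempty (PartialDiag u I dd J Xf ι e) := by
  classical
  intro S
  induction S using Finset.strongInduction with
  | _ S IH =>
    rcases eq_or_ne S ∅ with rfl | hne
    · refine ⟨PEmpty, inferInstance, PEmpty.elim, fun i => i.elim, fun δ hδ => absurd hδ (by simp),
        ⟨{ c := fun i => i.elim, ψ := fun i => i.elim, mem := fun i => i.elim,
           g := fun i => i.elim, w := fun i => i.elim, g_id := fun i => i.elim,
           g_comp := fun i => i.elim, p := fun j i => i.elim, pw := fun j i => i.elim,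
           pmem := fun j i => i.elim, pnat := fun j i => i.elim }⟩⟩
    · have hne' : S.Nonempty := Finset.nonempty_iff_ne_empty.mpr hne
      obtain ⟨δ₀, hδ₀, hminS⟩ := exists_minimal hnoloop S hne'
      obtain ⟨ι, instι, e, hmemS', hsurj', ⟨P⟩⟩ :=
        IH (S.erase δ₀) (Finset.erase_ssubset hδ₀)
      have hnoteq : ∀ i, e i ≠ δ₀ := fun i => Finset.ne_of_mem_erase (hmemS' i)
      have hmin : ∀ i, (e i ⟶ δ₀) → False := fun i α =>
        hnoteq i (hminS (e i) (Finset.mem_of_mem_erase (hmemS' i)) α)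
      obtain ⟨P'⟩ := extend_partial u I dd hthin hcof hrep J Xf hXf ι e δ₀
        (hendo δ₀) hmin P
      refine ⟨Option ι, inferInstance, fun o => o.elim δ₀ e, ?_, ?_, ⟨P'⟩⟩
      · rintro (_ | i)
        · exact hδ₀
        · exact Finset.mem_of_mem_erase (hmemS' i)
      · intro δ hδ
        rcases eq_or_ne δ δ₀ with rfl | hδne
        · exact ⟨none, rfl⟩
        · obtain ⟨i, hi⟩ := hsurj' δ (Finset.mem_erase.mpr ⟨hδne, hδ⟩)
          exact ⟨some i, hi⟩

lemma objs_congr {d : D} (Id : Subcategory (StructuredArrow d u))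
    {A A' : StructuredArrow d u} (hA : A = A') (hm : A ∈ Id.objs) : A' ∈ Id.objs := hA ▸ hm

lemma homs_transport_src {d : D} (Id : Subcategory (StructuredArrow d u))
    {A A' B : StructuredArrow d u} (hA : A = A') (f : A ⟶ B)
    (hm : f ∈ Id.homs A B) : eqToHom hA.symm ≫ f ∈ Id.homs A' B := by
  subst hA
  simpa using hm

lemma mem_transport (I : ∀ d : D, Subcategory (StructuredArrow d u)) (dd : Δ ⥤ D)
    {a b : Δ} (h : a = b) {cc : C} (ψa : dd.obj a ⟶ u.obj cc)
    (hm : StructuredArrow.mk ψa ∈ (I (dd.obj a)).objs) :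
    StructuredArrow.mk (eqToHom (congrArg dd.obj h.symm) ≫ ψa) ∈ (I (dd.obj b)).objs := by
  subst h
  refine objs_congr u _ ?_ hm
  have : eqToHom (congrArg dd.obj (Eq.refl a).symm) = 𝟙 (dd.obj a) := by simp
  rw [this, Category.id_comp]

lemma app_transport (dd : Δ ⥤ D) {a b : Δ} (h : a = b) (G : Δ ⥤ C)
    (τ : dd ⟶ ((Functor.whiskeringRight Δ C D).obj u).obj G)
    {cc : C} (ψa : dd.obj a ⟶ u.obj cc) (pp : cc ⟶ G.obj a)
    (hw : ψa ≫ u.map pp = τ.app a) :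
    (eqToHom (congrArg dd.obj h.symm) ≫ ψa) ≫ u.map (pp ≫ eqToHom (congrArg G.obj h)) =
      τ.app b := by
  subst h; simpa using hw

lemma w_transport (dd : Δ ⥤ D) {a a' b b' : Δ} (ha : a = a') (hb : b = b')
    {ca cb : C} (ψa : dd.obj a ⟶ u.obj ca) (ψb : dd.obj b ⟶ u.obj cb)
    (γ : ca ⟶ cb) (α' : a' ⟶ b')
    (hw : ψa ≫ u.map γ = dd.map (eqToHom ha ≫ α' ≫ eqToHom hb.symm) ≫ ψb) :
    dd.map α' ≫ eqToHom (congrArg dd.obj hb.symm) ≫ ψb =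
      (eqToHom (congrArg dd.obj ha.symm) ≫ ψa) ≫ u.map γ := by
  subst ha; subst hb
  simp only [eqToHom_refl, Category.id_comp, Category.comp_id] at hw ⊢
  rw [hw]

lemma pnat_transport {a a' b b' : Δ} (ha : a = a') (hb : b = b') (G : Δ ⥤ C)
    {ca cb : C} (pa : ca ⟶ G.obj a) (pb : cb ⟶ G.obj b) (γ : ca ⟶ cb) (α' : a' ⟶ b')
    (hp : γ ≫ pb = pa ≫ G.map (eqToHom ha ≫ α' ≫ eqToHom hb.symm)) :
    γ ≫ (pb ≫ eqToHom (congrArg G.obj hb)) = (pa ≫ eqToHom (congrArg G.obj ha)) ≫ G.map α' := by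
  subst ha; subst hb
  simp only [eqToHom_refl, Category.id_comp, Category.comp_id] at hp ⊢
  exact hp

lemma hommem_transport (I : ∀ d : D, Subcategory (StructuredArrow d u)) (dd : Δ ⥤ D)
    {a b : Δ} (h : a = b) (G : Δ ⥤ C)
    (τ : dd ⟶ ((Functor.whiskeringRight Δ C D).obj u).obj G)
    {cc : C} (ψa : dd.obj a ⟶ u.obj cc) (pp : cc ⟶ G.obj a)
    (hw : ψa ≫ u.map pp = τ.app a)
    (hm : StructuredArrow.homMk pp hw ∈
      (I (dd.obj a)).homs (StructuredArrow.mk ψa) (StructuredArrow.mk (τ.app a)))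
    (hw' : (eqToHom (congrArg dd.obj h.symm) ≫ ψa) ≫
        u.map (pp ≫ eqToHom (congrArg G.obj h)) = τ.app b) :
    StructuredArrow.homMk (pp ≫ eqToHom (congrArg G.obj h)) hw' ∈
      (I (dd.obj b)).homs (StructuredArrow.mk (eqToHom (congrArg dd.obj h.symm) ≫ ψa))
        (StructuredArrow.mk (τ.app b)) := by
  subst h
  have hA : (StructuredArrow.mk ψa : StructuredArrow (dd.obj a) u) =
      StructuredArrow.mk (eqToHom (congrArg dd.obj (Eq.refl a).symm) ≫ ψa) := by
    have : eqToHom (congrArg dd.obj (Eq.refl a).symm) = 𝟙 (dd.obj a) := by simp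
    rw [this, Category.id_comp]
  have hmem2 := homs_transport_src u _ hA
    (StructuredArrow.homMk pp hw : StructuredArrow.mk ψa ⟶ StructuredArrow.mk (τ.app a)) hm
  have hfe : eqToHom hA.symm ≫ (StructuredArrow.homMk pp hw :
        StructuredArrow.mk ψa ⟶ StructuredArrow.mk (τ.app a)) =
      (StructuredArrow.homMk (pp ≫ eqToHom (congrArg G.obj (Eq.refl a))) hw' :
        StructuredArrow.mk (eqToHom (congrArg dd.obj (Eq.refl a).symm) ≫ ψa) ⟶
          StructuredArrow.mk (τ.app a)) := by
    apply StructuredArrow.hom_ext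
    simp [StructuredArrow.eqToHom_right]
    erw [StructuredArrow.eqToHom_right, eqToHom_refl, Category.id_comp]
  exact hfe ▸ hmem2

lemma exists_global
    (I : ∀ d : D, Subcategory (StructuredArrow d u)) (dd : Δ ⥤ D)
    (hthin : ∀ d, Quiver.IsThin (I d).Carrier)
    (hcof : ∀ d, IsCofiltered (I d).Carrier)
    (hrep : ∀ d, Corepresents u d (I d))
    [FinCategory Δ]
    (hnoloop : ∀ a b : Δ, Nonempty (a ⟶ b) → Nonempty (b ⟶ a) → a = b)
    (hendo : ∀ (a : Δ) (α : a ⟶ a), α = 𝟙 a)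
    (J : Type) [Fintype J] (Xf : J → StructuredArrow dd ((Functor.whiskeringRight Δ C D).obj u))
    (hXf : ∀ j δ, evalObj u dd (Xf j) δ ∈ (I (dd.obj δ)).objs) :
    ∃ W, (∀ δ, evalObj u dd W δ ∈ (I (dd.obj δ)).objs) ∧
      ∀ j, ∃ f : W ⟶ Xf j, ∀ δ, evalMap u dd f δ ∈
        (I (dd.obj δ)).homs (evalObj u dd W δ) (evalObj u dd (Xf j) δ) := by
  classical
  obtain ⟨ι, instι, e, hmemS, hsurj, ⟨P⟩⟩ :=
    exists_partialDiag u I dd hthin hcof hrep hnoloop hendo J Xf hXf Finset.univ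
  have hsurj' : ∀ δ : Δ, ∃ i, e i = δ := fun δ => hsurj δ (Finset.mem_univ δ)
  choose σ he using hsurj'
  let F : Δ ⥤ C :=
    { obj := fun δ => P.c (σ δ)
      map := fun {δ δ'} α => P.g (σ δ) (σ δ') (eqToHom (he δ) ≫ α ≫ eqToHom (he δ').symm)
      map_id := fun δ => by
        show P.g (σ δ) (σ δ) (eqToHom (he δ) ≫ 𝟙 δ ≫ eqToHom (he δ).symm) = 𝟙 (P.c (σ δ))
        have h1 : eqToHom (he δ) ≫ 𝟙 δ ≫ eqToHom (he δ).symm = 𝟙 (e (σ δ)) := by simp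
        rw [h1, P.g_id]
      map_comp := fun {δ δ' δ''} α β => by
        show P.g (σ δ) (σ δ'') (eqToHom (he δ) ≫ (α ≫ β) ≫ eqToHom (he δ'').symm) =
          P.g (σ δ) (σ δ') (eqToHom (he δ) ≫ α ≫ eqToHom (he δ').symm) ≫
            P.g (σ δ') (σ δ'') (eqToHom (he δ') ≫ β ≫ eqToHom (he δ'').symm)
        have h1 : eqToHom (he δ) ≫ (α ≫ β) ≫ eqToHom (he δ'').symm =
            (eqToHom (he δ) ≫ α ≫ eqToHom (he δ').symm) ≫
              (eqToHom (he δ') ≫ β ≫ eqToHom (he δ'').symm) := by simp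
        rw [h1, P.g_comp] }
  let η : dd ⟶ ((Functor.whiskeringRight Δ C D).obj u).obj F :=
    { app := fun δ => eqToHom (congrArg dd.obj (he δ).symm) ≫ P.ψ (σ δ)
      naturality := fun δ δ' α =>
        w_transport u dd (he δ) (he δ') (P.ψ (σ δ)) (P.ψ (σ δ'))
          (P.g (σ δ) (σ δ') (eqToHom (he δ) ≫ α ≫ eqToHom (he δ').symm)) α
          (P.w (σ δ) (σ δ') (eqToHom (he δ) ≫ α ≫ eqToHom (he δ').symm)) }
  refine ⟨StructuredArrow.mk (Y := F) η, fun δ => ?_, fun j => ?_⟩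
  · exact mem_transport u I dd (he δ) (P.ψ (σ δ)) (P.mem (σ δ))
  · let τ : F ⟶ (Xf j).right :=
      { app := fun δ => P.p j (σ δ) ≫ eqToHom (congrArg (Xf j).right.obj (he δ))
        naturality := fun δ δ' α =>
          pnat_transport (he δ) (he δ') (Xf j).right (P.p j (σ δ)) (P.p j (σ δ'))
            (P.g (σ δ) (σ δ') (eqToHom (he δ) ≫ α ≫ eqToHom (he δ').symm)) α
            (P.pnat j (σ δ) (σ δ') (eqToHom (he δ) ≫ α ≫ eqToHom (he δ').symm)) }
    refine ⟨StructuredArrow.homMk τ ?_, fun δ => ?_⟩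
    · apply NatTrans.ext
      funext δ
      exact app_transport u dd (he δ) (Xf j).right (Xf j).hom (P.ψ (σ δ)) (P.p j (σ δ))
        (P.pw j (σ δ))
    · exact hommem_transport u I dd (he δ) (Xf j).right (Xf j).hom (P.ψ (σ δ)) (P.p j (σ δ))
        (P.pw j (σ δ)) (P.pmem j (σ δ)) (app_transport u dd (he δ) (Xf j).right (Xf j).hom
          (P.ψ (σ δ)) (P.p j (σ δ)) (P.pw j (σ δ)))

/-- If, for every `d`, the subcategory `I(d)` of `d ↓ u` is thin, cofiltered and corepresents
`c' ↦ Hom_D(d, u c')`, and if `Δ` is a finite category without loops, then for every diagram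
`d̲ : Δ ⥤ D` the componentwise subcategory `I(d̲)` of `d̲ ↓ u^Δ` is thin and cofiltered. -/
theorem diagramSubcat_thin_and_cofiltered
    (I : ∀ d : D, Subcategory (StructuredArrow d u))
    (hthin : ∀ d : D, Quiver.IsThin (I d).Carrier)
    (hcof : ∀ d : D, IsCofiltered (I d).Carrier)
    (hrep : ∀ d : D, Corepresents u d (I d))
    [FinCategory Δ]
    (hnoloop : ∀ a b : Δ, Nonempty (a ⟶ b) → Nonempty (b ⟶ a) → a = b)
    (hendo : ∀ (a : Δ) (e : a ⟶ a), e = 𝟙 a)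
    (dd : Δ ⥤ D) :
    Quiver.IsThin (diagramSubcat u I dd).Carrier ∧
      IsCofiltered (diagramSubcat u I dd).Carrier := by
  classical
  have thin : Quiver.IsThin (diagramSubcat u I dd).Carrier := by
    intro X Y
    constructor
    intro f g
    apply Subtype.ext
    apply StructuredArrow.hom_ext
    apply NatTrans.ext
    funext δ
    have h := @Subsingleton.elim _
      (hthin (dd.obj δ) ⟨evalObj u dd X.1 δ, X.2 δ⟩ ⟨evalObj u dd Y.1 δ, Y.2 δ⟩)
      ⟨evalMap u dd f.1 δ, f.2 δ⟩ ⟨evalMap u dd g.1 δ, g.2 δ⟩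
    exact congrArg (fun q => (Subtype.val q).right) h
  refine ⟨thin, ?_⟩
  obtain ⟨W₀, hW₀, -⟩ := exists_global u I dd hthin hcof hrep hnoloop hendo
    PEmpty (fun j => j.elim) (fun j => j.elim)
  haveI hoe : IsCofilteredOrEmpty (diagramSubcat u I dd).Carrier := by
    constructor
    · intro X Y
      obtain ⟨W, hW, hf⟩ := exists_global u I dd hthin hcof hrep hnoloop hendo
        Bool (fun b => cond b X.1 Y.1)
        (fun b => by cases b with
          | false => exact Y.2
          | true => exact X.2)
      obtain ⟨fX, hfX⟩ := hf true
      obtain ⟨fY, hfY⟩ := hf false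
      exact ⟨⟨W, hW⟩, ⟨fX, hfX⟩, ⟨fY, hfY⟩, trivial⟩
    · intro X Y f g
      exact ⟨X, 𝟙 X, by rw [Subsingleton.elim f g]⟩
  haveI hne : Nonempty (diagramSubcat u I dd).Carrier := ⟨⟨W₀, hW₀⟩⟩
  exact @IsCofiltered.mk _ _ hoe hne
end
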